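/- arXiv:math/0608586 — 2 statements merged into one kernel-verified Lean document; each statement's English description precedes it below -/
import Mathlib

section
/- Let Δ₊ be the set of positive roots of a semisimple complex Lie algebra g with respect to a Cartan subalgebra h, with simple roots α₁,…,α_l. If μ ∈ h is chosen so that the values α₁(μ),…,α_l(μ) are algebraically independent over ℚ, then the numbers 1/⟨α, μ⟩, for α ∈ Δ₊, are linearly independent over ℚ. -/
lemma aux_exists_forall_ne_zero {F M : Type*} [Field F] [Infinite F] [AddCommGroup M]
    [Module F M] (s : Finset (M →ₗ[F] F)) (hs : ∀ g ∈ s, g ≠ 0) :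
    ∃ v : M, ∀ g ∈ s, g v ≠ 0 := by
  classical
  induction s using Finset.induction with
  | empty => exact ⟨0, by simp⟩
  | @insert g s hgs ih =>
    obtain ⟨v, hv⟩ := ih (fun f hf => hs f (Finset.mem_insert_of_mem hf))
    have hg : g ≠ 0 := hs g (Finset.mem_insert_self g s)
    by_cases hgv : g v ≠ 0
    · exact ⟨v, fun f hf => (Finset.mem_insert.mp hf).elim (fun h => h ▸ hgv) (hv f)⟩
    · push_neg at hgv
      obtain ⟨w, hw⟩ : ∃ w, g w ≠ 0 := by
        by_contra h; push_neg at h; exact hg (LinearMap.ext h)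
      obtain ⟨t, ht⟩ := Infinite.exists_notMem_finset
        (insert (0 : F) (s.image fun f => -(f v) / (f w)))
      refine ⟨v + t • w, ?_⟩
      have ht0 : t ≠ 0 := fun h => ht (by rw [h]; exact Finset.mem_insert_self 0 _)
      intro f hf
      rcases Finset.mem_insert.mp hf with rfl | hfs
      · simp [hgv, hw, ht0]
      · intro h0
        have hfv : f v + t * f w = 0 := by simpa [smul_eq_mul] using h0
        by_cases hfw : f w = 0
        · exact hv f hfs (by simpa [hfw] using hfv)
        · apply ht
          apply Finset.mem_insert_of_mem
          refine Finset.mem_image.mpr ⟨f, hfs, ?_⟩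
          field_simp
          linear_combination -hfv
lemma aux_smul_of_ker {F M : Type*} [Field F] [AddCommGroup M] [Module F M]
    (f g : M →ₗ[F] F) (hf : f ≠ 0) (h : ∀ x, f x = 0 → g x = 0) : ∃ c : F, g = c • f := by
  obtain ⟨u₀, hu₀⟩ : ∃ u, f u ≠ 0 := by
    by_contra hc; push_neg at hc; exact hf (LinearMap.ext hc)
  set u : M := (f u₀)⁻¹ • u₀ with hu
  have hfu : f u = 1 := by simp [hu, hu₀]
  refine ⟨g u, LinearMap.ext fun x => ?_⟩
  have : g (x - f x • u) = 0 := h _ (by simp [hfu])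
  simp only [map_sub, map_smul, smul_eq_mul, sub_eq_zero] at this
  simp [this, smul_eq_mul, mul_comm]


/-- Let `Δ₊` be the set of positive roots of a semisimple complex Lie algebra `g`
with respect to a Cartan subalgebra `h`, with simple roots `α₁, …, α_l`.
If `μ ∈ h` is chosen so that the values `α₁(μ), …, α_l(μ)` are algebraically
independent over `ℚ`, then the numbers `1 / ⟨α, μ⟩`, for `α ∈ Δ₊`, are
linearly independent over `ℚ`.

The relevant structural facts about the positive roots (recorded in the
context) are taken as hypotheses: every positive root is a nonzero
nonnegative-integral combination of the simple roots `αs 1, …, αs l`, and no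
two distinct positive roots are proportional. -/
theorem stmt_3 (L : Type) [LieRing L] [LieAlgebra ℂ L] [Module.Finite ℂ L]
    [LieAlgebra.IsSemisimple ℂ L]
    (H : LieSubalgebra ℂ L) [H.IsCartanSubalgebra]
    (l : ℕ) (αs : Fin l → Module.Dual ℂ H)
    (Δplus : Finset (Module.Dual ℂ H))
    -- every element of `Δplus` is a root:
    (hroot : ∀ α ∈ Δplus, (α : Module.Dual ℂ H) ≠ 0 ∧
      LieAlgebra.rootSpace H (α : H → ℂ) ≠ ⊥)
    -- the simple roots are positive roots:
    (hsimple : ∀ i, αs i ∈ Δplus)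
    -- every positive root is a nonnegative integral combination of simple roots:
    (hcomb : ∀ α ∈ Δplus, ∃ k : Fin l → ℕ, α = ∑ i, (k i : ℂ) • αs i)
    -- no two distinct positive roots are proportional:
    (hprop : ∀ α ∈ Δplus, ∀ β ∈ Δplus, α ≠ β → ∀ c : ℂ, α ≠ c • β)
    (μ : H)
    (halg : AlgebraicIndependent ℚ (fun i : Fin l => (αs i) μ)) :
    LinearIndependent ℚ (fun α : Δplus => ((α : Module.Dual ℂ H) μ)⁻¹) := by
  classical
  set x : Fin l → ℂ := fun i => (αs i) μ with hx
  -- coefficient vectors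
  have hcomb' : ∀ α : Δplus, ∃ k : Fin l → ℕ,
      (α : Module.Dual ℂ H) = ∑ i, (k i : ℂ) • αs i := fun α => hcomb α α.2
  choose K hK using hcomb'
  -- the linear polynomials
  set P : Δplus → MvPolynomial (Fin l) ℚ :=
    fun α => ∑ i, MvPolynomial.C ((K α i : ℚ)) * MvPolynomial.X i with hP
  have evalP : ∀ α : Δplus, MvPolynomial.aeval x (P α) = (α : Module.Dual ℂ H) μ := by
    intro α
    have : (α : Module.Dual ℂ H) μ = ∑ i, (K α i : ℂ) * x i := by
      rw [hK α]; simp [hx]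
    rw [this, hP]
    simp only [map_sum, map_mul, MvPolynomial.aeval_C, MvPolynomial.aeval_X]
    congr 1
  -- nonzero coefficient exists
  have hKne : ∀ α : Δplus, ∃ i, K α i ≠ 0 := by
    intro α
    by_contra hc
    push_neg at hc
    exact (hroot α α.2).1 (by rw [hK α]; simp [hc])
  -- evaluation of P at rational points
  have evalPy : ∀ (α : Δplus) (y : Fin l → ℚ),
      MvPolynomial.eval y (P α) = ∑ i, (K α i : ℚ) * y i := by
    intro α y; rw [hP]; simp
  -- α μ ≠ 0
  have hne : ∀ α : Δplus, (α : Module.Dual ℂ H) μ ≠ 0 := by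
    intro α h0
    have hP0 : P α = 0 := by
      apply halg
      rw [evalP α, h0, map_zero]
    obtain ⟨i, hi⟩ := hKne α
    have := evalPy α (Pi.single i 1)
    rw [hP0] at this
    simp [Pi.single_apply, mul_ite, Finset.sum_ite_eq'] at this
    exact hi (by exact_mod_cast this.symm)
  -- the linear functionals over ℚ
  set f : Δplus → ((Fin l → ℚ) →ₗ[ℚ] ℚ) :=
    fun β => ∑ i, (K β i : ℚ) • LinearMap.proj i with hf
  have hfapp : ∀ (β : Δplus) (y : Fin l → ℚ), f β y = ∑ i, (K β i : ℚ) * y i := by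
    intro β y; rw [hf]; simp
  have hfne : ∀ β : Δplus, f β ≠ 0 := by
    intro β h0
    obtain ⟨i, hi⟩ := hKne β
    have := hfapp β (Pi.single i 1)
    rw [h0] at this
    simp [Pi.single_apply, mul_ite, Finset.sum_ite_eq'] at this
    exact hi (by exact_mod_cast this.symm)
  rw [Fintype.linearIndependent_iff]
  intro g hsum α₀
  -- find the evaluation point y
  have hker : ∀ β : Δplus, β ≠ α₀ → ¬ (∀ z, f α₀ z = 0 → f β z = 0) := by
    intro β hβ hcontra
    obtain ⟨c, hc⟩ := aux_smul_of_ker (f α₀) (f β) (hfne α₀) hcontra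
    have hKc : ∀ i, (K β i : ℚ) = c * (K α₀ i : ℚ) := by
      intro i
      have h1 := hfapp β (Pi.single i 1)
      have h2 := hfapp α₀ (Pi.single i 1)
      rw [hc] at h1
      simp only [LinearMap.smul_apply, smul_eq_mul, h2] at h1
      have h1' : c * (K α₀ i : ℚ) = (K β i : ℚ) := by
        simpa [Pi.single_apply, mul_ite, Finset.sum_ite_eq'] using h1
      exact h1'.symm
    have : (β : Module.Dual ℂ H) = (c : ℂ) • (α₀ : Module.Dual ℂ H) := by
      rw [hK β, hK α₀, Finset.smul_sum]
      congr 1; ext i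
      rw [smul_smul]
      have h := congrArg (fun q : ℚ => (q : ℂ)) (hKc i)
      push_cast at h
      rw [h]
    have hne' : (β : Module.Dual ℂ H) ≠ (α₀ : Module.Dual ℂ H) :=
      fun h => hβ (Subtype.ext h)
    exact hprop β β.2 α₀ α₀.2 hne' (c : ℂ) this
  have hg' : ∀ β ∈ Finset.univ.erase α₀,
      (f β).comp (LinearMap.ker (f α₀)).subtype ≠ 0 := by
    intro β hβ h0
    apply hker β (Finset.ne_of_mem_erase hβ)
    intro z hz
    have := congrArg (fun F => F (⟨z, LinearMap.mem_ker.mpr hz⟩ : LinearMap.ker (f α₀))) h0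
    simpa using this
  obtain ⟨v, hv⟩ := aux_exists_forall_ne_zero
    ((Finset.univ.erase α₀).image fun β => (f β).comp (LinearMap.ker (f α₀)).subtype)
    (by
      intro gg hgg
      obtain ⟨β, hβ, rfl⟩ := Finset.mem_image.mp hgg
      exact hg' β hβ)
  set y : Fin l → ℚ := (v : Fin l → ℚ) with hy
  have hy0 : f α₀ y = 0 := v.2
  have hyne : ∀ β : Δplus, β ≠ α₀ → f β y ≠ 0 := by
    intro β hβ
    exact hv _ (Finset.mem_image.mpr ⟨β, Finset.mem_erase.mpr ⟨hβ, Finset.mem_univ β⟩, rfl⟩)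
  -- the polynomial identity
  set Q : MvPolynomial (Fin l) ℚ :=
    ∑ α : Δplus, MvPolynomial.C (g α) * ∏ β ∈ Finset.univ.erase α, P β with hQ
  have haevalQ : MvPolynomial.aeval x Q = 0 := by
    rw [hQ]
    simp only [map_sum, map_mul, map_prod, MvPolynomial.aeval_C, evalP]
    have hterm : ∀ α : Δplus,
        (algebraMap ℚ ℂ (g α)) * ∏ β ∈ Finset.univ.erase α, (β : Module.Dual ℂ H) μ
        = (∏ β : Δplus, (β : Module.Dual ℂ H) μ) *
          (g α • ((α : Module.Dual ℂ H) μ)⁻¹) := by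
      intro α
      rw [← Finset.prod_erase_mul Finset.univ _ (Finset.mem_univ α)]
      have : (g α : ℚ) • (((α : Module.Dual ℂ H) μ)⁻¹) = (g α : ℂ) * ((α : Module.Dual ℂ H) μ)⁻¹ := by
        rw [Rat.smul_def]
      rw [this]
      field_simp [hne α]
      rw [eq_ratCast]
      ring
    rw [Finset.sum_congr rfl (fun α _ => hterm α), ← Finset.mul_sum, hsum, mul_zero]
  have hQ0 : Q = 0 := by
    apply halg
    rw [haevalQ, map_zero]
  have hevalQy := congrArg (MvPolynomial.eval y) hQ0
  rw [hQ] at hevalQy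
  simp only [map_sum, map_mul, map_prod, MvPolynomial.eval_C, map_zero] at hevalQy
  have hev : ∀ β : Δplus, MvPolynomial.eval y (P β) = f β y := by
    intro β; rw [evalPy, hfapp]
  rw [Finset.sum_eq_single α₀] at hevalQy
  · have hprodne : ∏ β ∈ Finset.univ.erase α₀, MvPolynomial.eval y (P β) ≠ 0 := by
      apply Finset.prod_ne_zero_iff.mpr
      intro β hβ
      rw [hev β]
      exact hyne β (Finset.ne_of_mem_erase hβ)
    rcases mul_eq_zero.mp hevalQy with h | h
    · exact h
    · exact absurd h hprodne
  · intro α _ hα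
    have : MvPolynomial.eval y (P α₀) = 0 := by rw [hev, hy0]
    rw [Finset.prod_eq_zero (Finset.mem_erase.mpr ⟨Ne.symm hα, Finset.mem_univ α₀⟩) this,
      mul_zero]
  · intro h; exact absurd (Finset.mem_univ α₀) h
end

section
/- Let g be a semisimple complex Lie algebra, γ ∈ g* a linear functional, and for t ∈ ℂ let S(g)_t denote S(g) equipped with the Poisson bracket t{·,·} + (1−t){·,·}_γ, where {·,·} is the Poisson–Lie bracket and {x,y}_γ = γ([x,y]) for x,y ∈ g. For t ≠ 0, the algebra map ψ_t : S(g) → S(g) defined on generators x ∈ g by ψ_t(x) = t^{−1} x + t^{−2}(1−t) γ(x) is an isomorphism of Poisson algebras from S(g)_1 to S(g)_t. Moreover, if γ vanishes on all root vectors e_α (α ∈ Δ), then ψ_t maps the subspace Q_μ = { Σ_{α∈Δ₊} (⟨α,h⟩/⟨α,μ⟩) e_α e_{−α} : h ∈ h } onto itself. -/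
/-- Let `g` be semisimple, `γ ∈ g*`, and for `t ∈ ℂ` let `S(g)_t` be `S(g)` with
the Poisson bracket `t{·,·} + (1−t){·,·}_γ`.  For `t ≠ 0`, the algebra map
`ψ_t : S(g) → S(g)` with `ψ_t(x) = t⁻¹x + t⁻²(1−t)γ(x)` on generators
`x ∈ g` is an isomorphism of Poisson algebras `S(g)_1 → S(g)_t`.  Moreover,
if `γ` vanishes on all root vectors `e_α` (`α ∈ Δ`), then `ψ_t` maps the
subspace `Q_μ = { Σ_{α∈Δ₊} (⟨α,h⟩/⟨α,μ⟩) e_α e_{−α} : h ∈ h }` onto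
itself. -/
theorem stmt_5 (L : Type) [LieRing L] [LieAlgebra ℂ L] [Module.Finite ℂ L]
    [LieAlgebra.IsSemisimple ℂ L]
    (H : LieSubalgebra ℂ L) [H.IsCartanSubalgebra]
    (B : L →ₗ[ℂ] L →ₗ[ℂ] ℂ)
    (hBsymm : ∀ x y : L, B x y = B y x)
    (hBinv : ∀ x y z : L, B ⁅x, y⁆ z = B x ⁅y, z⁆)
    (hBnondeg : ∀ x : L, (∀ y : L, B x y = 0) → x = 0)
    (Δplus : Finset (Module.Dual ℂ H))
    (e : Module.Dual ℂ H → L)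
    (he_root : ∀ α ∈ Δplus, e α ∈ LieAlgebra.rootSpace H (α : H → ℂ) ∧
      e (-α) ∈ LieAlgebra.rootSpace H ((-α : Module.Dual ℂ H) : H → ℂ))
    (he_ne : ∀ α ∈ Δplus, e α ≠ 0 ∧ e (-α) ≠ 0)
    (he_pair : ∀ α ∈ Δplus, B (e α) (e (-α)) = 1)
    -- the symmetric algebra `S(g)`:
    (S : Type) [CommRing S] [Algebra ℂ S] (ι : L →ₗ[ℂ] S)
    (huniv : ∀ (A : Type) [CommRing A] [Algebra ℂ A] (f : L →ₗ[ℂ] A),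
      ∃! g : S →ₐ[ℂ] A, ∀ x : L, g (ι x) = f x)
    -- the Poisson–Lie bracket and the frozen bracket:
    (P : S →ₗ[ℂ] S →ₗ[ℂ] S)
    (hPskew : ∀ f g : S, P f g = - P g f)
    (hPleib : ∀ f g h : S, P f (g * h) = g * P f h + h * P f g)
    (hPgen : ∀ x y : L, P (ι x) (ι y) = ι ⁅x, y⁆)
    (γ : Module.Dual ℂ L)
    (Pγ : S →ₗ[ℂ] S →ₗ[ℂ] S)
    (hPγskew : ∀ f g : S, Pγ f g = - Pγ g f)
    (hPγleib : ∀ f g h : S, Pγ f (g * h) = g * Pγ f h + h * Pγ f g)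
    (hPγgen : ∀ x y : L, Pγ (ι x) (ι y) = algebraMap ℂ S (γ ⁅x, y⁆))
    -- `ψ_t` for `t ≠ 0`:
    (t : ℂ) (ht : t ≠ 0)
    (ψ : S →ₐ[ℂ] S)
    (hψ : ∀ x : L, ψ (ι x) = t⁻¹ • ι x + algebraMap ℂ S ((t ^ 2)⁻¹ * (1 - t) * γ x))
    -- a regular element `μ` of the Cartan subalgebra:
    (μ : H) (hμreg : ∀ α ∈ Δplus, α μ ≠ 0) :
    -- `ψ_t` is bijective …
    Function.Bijective ψ ∧
    -- … and a morphism of Poisson algebras `S(g)_1 → S(g)_t`: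
    (∀ f g : S, ψ (P f g) = t • P (ψ f) (ψ g) + (1 - t) • Pγ (ψ f) (ψ g)) ∧
    -- moreover, if `γ` vanishes on all root vectors, `ψ_t` maps `Q_μ` onto itself:
    ((∀ α ∈ Δplus, γ (e α) = 0 ∧ γ (e (-α)) = 0) →
      ψ '' Set.range (fun h : H => ∑ α ∈ Δplus,
          ((α : Module.Dual ℂ H) h / (α : Module.Dual ℂ H) μ) •
          (ι (e α) * ι (e (-α)))) =
        Set.range (fun h : H => ∑ α ∈ Δplus,
          ((α : Module.Dual ℂ H) h / (α : Module.Dual ℂ H) μ) •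
          (ι (e α) * ι (e (-α))))) := by
  classical
  -- `S` is generated by the image of `ι`
  obtain ⟨g0, hg0, hu0⟩ := huniv S ι
  have hadj : ∀ s : S, s ∈ Algebra.adjoin ℂ (Set.range ι) := by
    set A := Algebra.adjoin ℂ (Set.range ι) with hA
    let ι' : L →ₗ[ℂ] A :=
      { toFun := fun x => ⟨ι x, Algebra.subset_adjoin ⟨x, rfl⟩⟩
        map_add' := fun x y => Subtype.ext (by simp)
        map_smul' := fun c x => Subtype.ext (by simp) }
    obtain ⟨g, hg, -⟩ := huniv A ι'
    have h1 : A.val.comp g = AlgHom.id ℂ S := by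
      have e1 := hu0 (A.val.comp g) (fun x => by simp [hg x, ι'])
      have e2 := hu0 (AlgHom.id ℂ S) (fun x => rfl)
      rw [e1, e2]
    intro s
    have hs : A.val (g s) = s := by
      have := congrArg (fun f : S →ₐ[ℂ] S => f s) h1
      simpa using this
    exact hs ▸ (g s).2
  -- brackets kill constants
  have hP1 : ∀ f : S, P f 1 = 0 := by
    intro f
    have h := hPleib f 1 1
    simp only [mul_one, one_mul] at h
    exact (left_eq_add.mp h)
  have hPγ1 : ∀ f : S, Pγ f 1 = 0 := by
    intro f
    have h := hPγleib f 1 1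
    simp only [mul_one, one_mul] at h
    exact (left_eq_add.mp h)
  have hPc : ∀ (f : S) (c : ℂ), P f (algebraMap ℂ S c) = 0 := fun f c => by
    rw [Algebra.algebraMap_eq_smul_one, map_smul, hP1, smul_zero]
  have hPc' : ∀ (c : ℂ) (g : S), P (algebraMap ℂ S c) g = 0 := fun c g => by
    rw [hPskew, hPc, neg_zero]
  have hPγc : ∀ (f : S) (c : ℂ), Pγ f (algebraMap ℂ S c) = 0 := fun f c => by
    rw [Algebra.algebraMap_eq_smul_one, map_smul, hPγ1, smul_zero]
  have hPγc' : ∀ (c : ℂ) (g : S), Pγ (algebraMap ℂ S c) g = 0 := fun c g => by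
    rw [hPγskew, hPγc, neg_zero]
  -- the Poisson morphism property
  have key : ∀ f g : S, ψ (P f g) = t • P (ψ f) (ψ g) + (1 - t) • Pγ (ψ f) (ψ g) := by
    -- generator-generator case
    have hgen2 : ∀ x y : L,
        ψ (P (ι x) (ι y)) = t • P (ψ (ι x)) (ψ (ι y)) + (1 - t) • Pγ (ψ (ι x)) (ψ (ι y)) := by
      intro x y
      rw [hPgen, hψ, hψ, hψ]
      simp only [map_add, map_smul, LinearMap.add_apply, LinearMap.smul_apply,
        hPc, hPc', hPγc, hPγc', hPgen, hPγgen, smul_zero, add_zero, zero_add]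
      rw [Algebra.algebraMap_eq_smul_one, Algebra.algebraMap_eq_smul_one]
      match_scalars
      · field_simp
      · field_simp
    -- generator vs anything
    have hgenall : ∀ (x : L) (g : S),
        ψ (P (ι x) g) = t • P (ψ (ι x)) (ψ g) + (1 - t) • Pγ (ψ (ι x)) (ψ g) := by
      intro x g
      induction hadj g using Algebra.adjoin_induction with
      | mem s hs => obtain ⟨y, rfl⟩ := hs; exact hgen2 x y
      | algebraMap r =>
          rw [hPc, map_zero, AlgHom.commutes, hPc, hPγc, smul_zero, smul_zero, add_zero]
      | add s₁ s₂ hs₁ hs₂ ih₁ ih₂ =>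
          rw [map_add, map_add, map_add, map_add, map_add, ih₁, ih₂]
          module
      | mul s₁ s₂ hs₁ hs₂ ih₁ ih₂ =>
          rw [hPleib, map_mul, hPleib, hPγleib, map_add, map_mul, map_mul, ih₁, ih₂]
          simp only [Algebra.smul_def]
          ring
    intro f g
    induction hadj f using Algebra.adjoin_induction with
    | mem s hs => obtain ⟨x, rfl⟩ := hs; exact hgenall x g
    | algebraMap r =>
        rw [hPc', map_zero, AlgHom.commutes, hPc', hPγc', smul_zero, smul_zero, add_zero]
    | add s₁ s₂ hs₁ hs₂ ih₁ ih₂ =>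
        simp only [map_add, LinearMap.add_apply]
        rw [ih₁, ih₂]
        module
    | mul s₁ s₂ hs₁ hs₂ ih₁ ih₂ =>
        have e1 : P (s₁ * s₂) g = s₁ * P s₂ g + s₂ * P s₁ g := by
          rw [hPskew (s₁ * s₂) g, hPleib, hPskew g s₁, hPskew g s₂]; ring
        have e2 : P (ψ s₁ * ψ s₂) (ψ g) = ψ s₁ * P (ψ s₂) (ψ g) + ψ s₂ * P (ψ s₁) (ψ g) := by
          rw [hPskew (ψ s₁ * ψ s₂) (ψ g), hPleib, hPskew (ψ g) (ψ s₁), hPskew (ψ g) (ψ s₂)]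
          ring
        have e3 : Pγ (ψ s₁ * ψ s₂) (ψ g) = ψ s₁ * Pγ (ψ s₂) (ψ g) + ψ s₂ * Pγ (ψ s₁) (ψ g) := by
          rw [hPγskew (ψ s₁ * ψ s₂) (ψ g), hPγleib, hPγskew (ψ g) (ψ s₁), hPγskew (ψ g) (ψ s₂)]
          ring
        rw [e1, map_add, map_mul, map_mul, ih₁, ih₂, map_mul, e2, e3]
        simp only [Algebra.smul_def]
        ring
  -- bijectivity: construct the inverse
  have hbij : Function.Bijective ψ := by
    let f0 : L →ₗ[ℂ] S := t • ι + (Algebra.linearMap ℂ S).comp ((-(t⁻¹ * (1 - t))) • γ)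
    obtain ⟨φ, hφ, -⟩ := huniv S f0
    have hφ' : ∀ x : L, φ (ι x) = t • ι x + algebraMap ℂ S (-(t⁻¹ * (1 - t)) * γ x) := by
      intro x
      rw [hφ x]
      simp [f0, Algebra.smul_def]
      try ring
    have hψφ : ∀ x : L, ψ (φ (ι x)) = ι x := by
      intro x
      rw [hφ' x, map_add, map_smul, hψ, AlgHom.commutes]
      rw [Algebra.algebraMap_eq_smul_one, Algebra.algebraMap_eq_smul_one]
      match_scalars <;> field_simp <;> ring
    have hφψ : ∀ x : L, φ (ψ (ι x)) = ι x := by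
      intro x
      rw [hψ, map_add, map_smul, hφ' x, AlgHom.commutes]
      rw [Algebra.algebraMap_eq_smul_one, Algebra.algebraMap_eq_smul_one]
      match_scalars <;> field_simp <;> ring
    have c1 : ψ.comp φ = AlgHom.id ℂ S := by
      have e1 := hu0 (ψ.comp φ) (fun x => by simpa using hψφ x)
      have e2 := hu0 (AlgHom.id ℂ S) (fun x => rfl)
      rw [e1, e2]
    have c2 : φ.comp ψ = AlgHom.id ℂ S := by
      have e1 := hu0 (φ.comp ψ) (fun x => by simpa using hφψ x)
      have e2 := hu0 (AlgHom.id ℂ S) (fun x => rfl)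
      rw [e1, e2]
    have l1 : Function.LeftInverse φ ψ := fun s => by
      have := congrArg (fun f : S →ₐ[ℂ] S => f s) c2; simpa using this
    have l2 : Function.RightInverse φ ψ := fun s => by
      have := congrArg (fun f : S →ₐ[ℂ] S => f s) c1; simpa using this
    exact ⟨l1.injective, l2.surjective⟩
  refine ⟨hbij, key, ?_⟩
  -- the Q_μ statement
  intro hγ
  set Qf : H → S := fun h => ∑ α ∈ Δplus,
      ((α : Module.Dual ℂ H) h / (α : Module.Dual ℂ H) μ) • (ι (e α) * ι (e (-α))) with hQf
  have hψQ : ∀ h : H, ψ (Qf h) = Qf ((t ^ 2)⁻¹ • h) := by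
    intro h
    rw [hQf]
    simp only [map_sum, map_smul, map_mul]
    refine Finset.sum_congr rfl (fun α hα => ?_)
    rw [hψ (e α), hψ (e (-α)), (hγ α hα).1, (hγ α hα).2]
    simp only [mul_zero, map_zero, add_zero, map_smul, smul_mul_smul_comm]
    rw [smul_smul]
    match_scalars
    field_simp
    ring
    rw [mul_assoc (α h * (α μ)⁻¹), ← mul_pow, mul_inv_cancel₀ ht, one_pow, mul_one]
  ext s
  constructor
  · rintro ⟨-, ⟨h, rfl⟩, rfl⟩
    exact ⟨(t ^ 2)⁻¹ • h, (hψQ h).symm⟩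
  · rintro ⟨h, rfl⟩
    refine ⟨Qf (t ^ 2 • h), ⟨t ^ 2 • h, rfl⟩, ?_⟩
    rw [hψQ, smul_smul, inv_mul_cancel₀ (pow_ne_zero 2 ht), one_smul]
end
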